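/- D ∈ A if and only if for every irreducible element P ∈ A, whenever some irreducible factor of P in B is ramified, every irreducible factor of P in B is ramified. -/

import Mathlib

noncomputable section

open MvPolynomial

/-- The multiplicity of `Q` in the factorization of `P` equals `e`. -/
def MultIs {σ : Type} (Q P : MvPolynomial σ ℂ) (e : ℕ) : Prop :=
  Q ^ e ∣ P ∧ ¬ Q ^ (e + 1) ∣ P

/-- The Jacobian `det (∂ f i / ∂ X j)` of an `n`-tuple of polynomials. -/
def Jac {n : ℕ} (f : Fin n → MvPolynomial (Fin n) ℂ) : MvPolynomial (Fin n) ℂ :=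
  (Matrix.of fun i j : Fin n => pderiv j (f i)).det

/-- `RamIdx A Q e` : the contraction `QB ∩ A` is generated by an irreducible `P ∈ A`,
and `e` is the multiplicity of `Q` in the factorization of `P` in `B`. -/
def RamIdx {σ : Type} (A : Subalgebra ℂ (MvPolynomial σ ℂ))
    (Q : MvPolynomial σ ℂ) (e : ℕ) : Prop :=
  ∃ P : A, Irreducible P ∧
    (Ideal.span {Q}).comap (algebraMap A (MvPolynomial σ ℂ)) = Ideal.span {P} ∧
    MultIs Q (P : MvPolynomial σ ℂ) e

/-- `Q` is a ramified irreducible of `B` over `A`. -/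
def IsRamified {σ : Type} (A : Subalgebra ℂ (MvPolynomial σ ℂ))
    (Q : MvPolynomial σ ℂ) : Prop :=
  Irreducible Q ∧ ∃ e, RamIdx A Q e ∧ 1 < e

/-- `RamReps A S e` : `S` is a finite set of pairwise non-associated irreducible elements of `B`,
each ramified with ramification index `e Q`, and every ramified irreducible of `B` is associated
to exactly one element of `S`. -/
def RamReps {σ : Type} (A : Subalgebra ℂ (MvPolynomial σ ℂ))
    (S : Finset (MvPolynomial σ ℂ)) (e : MvPolynomial σ ℂ → ℕ) : Prop :=
  (∀ Q ∈ S, Irreducible Q ∧ RamIdx A Q (e Q) ∧ 1 < e Q) ∧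
  (∀ Q ∈ S, ∀ Q' ∈ S, Q ≠ Q' → ¬ Associated Q Q') ∧
  (∀ Q : MvPolynomial σ ℂ, IsRamified A Q → ∃! Q', Q' ∈ S ∧ Associated Q Q')

/-- The polynomial map `ℂⁿ → ℂⁿ` associated to an `n`-tuple of polynomials. -/
def polyMap {n : ℕ} (f : Fin n → MvPolynomial (Fin n) ℂ) : (Fin n → ℂ) → (Fin n → ℂ) :=
  fun x i => eval x (f i)

/-- The branch locus: points whose fiber has fewer than `r` elements. -/
def branchLocus {n : ℕ} (f : Fin n → MvPolynomial (Fin n) ℂ) (r : ℕ) : Set (Fin n → ℂ) :=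
  {u | (polyMap f ⁻¹' {u}).Finite ∧ (polyMap f ⁻¹' {u}).ncard < r}

end

open MvPolynomial in
/-- Units of a multivariate polynomial ring over `ℂ` are constants. -/
lemma mv_isUnit_eq_C : ∀ {n : ℕ} (p : MvPolynomial (Fin n) ℂ), IsUnit p →
    ∃ c : ℂ, p = MvPolynomial.C c := by
  intro n
  induction n with
  | zero =>
    intro p _
    obtain ⟨c, hc⟩ := MvPolynomial.C_surjective (Fin 0) p
    exact ⟨c, hc.symm⟩
  | succ n ih =>
    intro p hp
    have hq : IsUnit (MvPolynomial.finSuccEquiv ℂ n p) := hp.map _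
    obtain ⟨r, hr, hrp⟩ := Polynomial.isUnit_iff.mp hq
    obtain ⟨c, hc⟩ := ih r hr
    refine ⟨c, ?_⟩
    have h1 : p = (MvPolynomial.finSuccEquiv ℂ n).symm (Polynomial.C r) := by
      rw [hrp]; exact ((MvPolynomial.finSuccEquiv ℂ n).symm_apply_apply p).symm
    have h2 : (Polynomial.C (MvPolynomial.C c : MvPolynomial (Fin n) ℂ)) =
        algebraMap ℂ (Polynomial (MvPolynomial (Fin n) ℂ)) c := by
      rw [Polynomial.algebraMap_apply, MvPolynomial.algebraMap_eq]
    rw [h1, hc, h2, AlgEquiv.commutes, MvPolynomial.algebraMap_eq]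

/-- In a UFD, an element with prescribed exact prime power divisors and whose prime factors
all come from `T` is associated to the corresponding product of prime powers. -/
lemma assoc_prod_of_factors {α : Type*} [CommMonoidWithZero α]
    [UniqueFactorizationMonoid α] (T : Finset α) (m : α → ℕ) :
    ∀ x : α, x ≠ 0 →
      (∀ t ∈ T, Prime t ∧ 1 ≤ m t ∧ t ^ m t ∣ x ∧ ¬ t ^ (m t + 1) ∣ x) →
      (∀ t ∈ T, ∀ s ∈ T, t ≠ s → ¬ Associated t s) →
      (∀ q : α, Prime q → q ∣ x → ∃ t ∈ T, Associated q t) →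
      Associated x (∏ t ∈ T, t ^ m t) := by
  induction T using Finset.cons_induction with
  | empty =>
    intro x hx _ _ hfac
    rw [Finset.prod_empty, associated_one_iff_isUnit]
    by_contra hu
    obtain ⟨q, hqirr, hqdvd⟩ := WfDvdMonoid.exists_irreducible_factor hu hx
    obtain ⟨t, ht, _⟩ := hfac q (UniqueFactorizationMonoid.irreducible_iff_prime.mp hqirr) hqdvd
    exact absurd ht (Finset.notMem_empty t)
  | cons t T' hnot ih =>
    intro x hx hH hpw hfac
    obtain ⟨htp, htm, htd, htnd⟩ := hH t (Finset.mem_cons_self t T')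
    obtain ⟨x', hx'⟩ := htd
    have hx'0 : x' ≠ 0 := by rintro rfl; simp at hx'; exact hx hx'
    have htx' : ¬ t ∣ x' := by
      intro hdvd
      exact htnd (by rw [hx', pow_succ]; exact mul_dvd_mul_left _ hdvd)
    have hxd : x' ∣ x := ⟨t ^ m t, by rw [hx', mul_comm]⟩
    have key : ∀ s ∈ T', ¬ s ∣ t ^ m t := by
      intro s hs hdvd
      have hsp := (hH s (Finset.mem_cons_of_mem hs)).1
      have : s ∣ t := hsp.dvd_of_dvd_pow hdvd
      have hassoc : Associated s t := hsp.associated_of_dvd htp this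
      have hne : s ≠ t := by rintro rfl; exact hnot hs
      exact hpw s (Finset.mem_cons_of_mem hs) t (Finset.mem_cons_self t T') hne hassoc
    have ihx : Associated x' (∏ s ∈ T', s ^ m s) := by
      refine ih x' hx'0 ?_ ?_ ?_
      · intro s hs
        obtain ⟨hsp, hsm, hsd, hsnd⟩ := hH s (Finset.mem_cons_of_mem hs)
        refine ⟨hsp, hsm, ?_, ?_⟩
        · exact hsp.pow_dvd_of_dvd_mul_left _ (key s hs) (hx' ▸ hsd)
        · exact fun h => hsnd (h.trans hxd)
      · intro s hs s' hs' hne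
        exact hpw s (Finset.mem_cons_of_mem hs) s' (Finset.mem_cons_of_mem hs') hne
      · intro q hq hqd
        obtain ⟨s, hs, hqs⟩ := hfac q hq (hqd.trans hxd)
        rcases Finset.mem_cons.mp hs with rfl | hs'
        · exact absurd (hqs.symm.dvd.trans hqd) htx'
        · exact ⟨s, hs', hqs⟩
    rw [Finset.prod_cons, hx']
    exact Associated.mul_left _ ihx

open MvPolynomial in
theorem discriminant_mem_iff_ramified_factors_propagate {n : ℕ} (hn : 0 < n)
    (b : Fin n → ℕ) (hb : ∀ i, 0 < b i) (a : Fin n → ℕ)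
    (f : Fin n → MvPolynomial (Fin n) ℂ)
    (hhom : ∀ i, IsWeightedHomogeneous b (f i) (a i))
    (A : Subalgebra ℂ (MvPolynomial (Fin n) ℂ))
    (hA : A = Algebra.adjoin ℂ (Set.range f))
    (hfin : Module.Finite A (MvPolynomial (Fin n) ℂ))
    (S : Finset (MvPolynomial (Fin n) ℂ)) (eIdx : MvPolynomial (Fin n) ℂ → ℕ)
    (hS : RamReps A S eIdx) :
    (∏ Q ∈ S, Q ^ eIdx Q) ∈ A ↔
      ∀ P : A, Irreducible P →
        (∃ Q : MvPolynomial (Fin n) ℂ, Irreducible Q ∧ Q ∣ (P : MvPolynomial (Fin n) ℂ) ∧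
          IsRamified A Q) →
        ∀ Q : MvPolynomial (Fin n) ℂ, Irreducible Q → Q ∣ (P : MvPolynomial (Fin n) ℂ) →
          IsRamified A Q := by
  classical
  obtain ⟨hS1, hS2, hS3⟩ := hS
  have h_dvd_comap : ∀ (Q : MvPolynomial (Fin n) ℂ) (P0 x : A),
      (Ideal.span {Q}).comap (algebraMap A (MvPolynomial (Fin n) ℂ)) = Ideal.span {P0} →
      Q ∣ (x : MvPolynomial (Fin n) ℂ) → P0 ∣ x := by
    intro Q P0 x hcom hdvd
    have hx : x ∈ (Ideal.span {Q}).comap (algebraMap A (MvPolynomial (Fin n) ℂ)) := by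
      rw [Ideal.mem_comap, Ideal.mem_span_singleton]
      exact hdvd
    rw [hcom, Ideal.mem_span_singleton] at hx
    exact hx
  have h_coe_dvd : ∀ x y : A, x ∣ y → (x : MvPolynomial (Fin n) ℂ) ∣ (y : MvPolynomial (Fin n) ℂ) := by
    rintro x y ⟨c, rfl⟩
    exact ⟨(c : MvPolynomial (Fin n) ℂ), rfl⟩
  have h_ram_assoc : ∀ Q Q' : MvPolynomial (Fin n) ℂ, Associated Q Q' →
      IsRamified A Q → IsRamified A Q' := by
    rintro Q Q' h ⟨hirr, e, ⟨P, hP, hcom, hm1, hm2⟩, he⟩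
    refine ⟨h.irreducible hirr, e, ⟨P, hP, ?_, ?_, ?_⟩, he⟩
    · rw [← Ideal.span_singleton_eq_span_singleton.mpr h]; exact hcom
    · exact (h.pow_pow.dvd_iff_dvd_left).mp hm1
    · exact fun hc => hm2 ((h.pow_pow.dvd_iff_dvd_left).mpr hc)
  have hBprime : ∀ q : MvPolynomial (Fin n) ℂ, Irreducible q → Prime q :=
    fun q hq => UniqueFactorizationMonoid.irreducible_iff_prime.mp hq
  constructor
  · intro hD P hPirr hex Q hQirr hQdvd
    obtain ⟨Q0, hQ0irr, hQ0dvd, hQ0ram⟩ := hex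
    obtain ⟨e0, ⟨P0, hP0irr, hcom0, -⟩, -⟩ := hQ0ram.2
    have hP0P : Associated ((P0 : A) : MvPolynomial (Fin n) ℂ) (P : MvPolynomial (Fin n) ℂ) :=
      (hP0irr.associated_of_dvd hPirr (h_dvd_comap Q0 P0 P hcom0 hQ0dvd)).map A.val
    obtain ⟨Q1, ⟨hQ1S, hQ1as⟩, -⟩ := hS3 Q0 hQ0ram
    have he1 : eIdx Q1 ≠ 0 := by have := (hS1 Q1 hQ1S).2.2; omega
    have hQ0D : Q0 ∣ ∏ Q' ∈ S, Q' ^ eIdx Q' :=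
      hQ1as.dvd.trans ((dvd_pow_self Q1 he1).trans
        (Finset.dvd_prod_of_mem (fun Q' => Q' ^ eIdx Q') hQ1S))
    have hP0D : P0 ∣ (⟨∏ Q' ∈ S, Q' ^ eIdx Q', hD⟩ : A) :=
      h_dvd_comap Q0 P0 ⟨∏ Q' ∈ S, Q' ^ eIdx Q', hD⟩ hcom0 hQ0D
    have hPD : (P : MvPolynomial (Fin n) ℂ) ∣ ∏ Q' ∈ S, Q' ^ eIdx Q' :=
      hP0P.symm.dvd.trans (h_coe_dvd _ _ hP0D)
    have hQD : Q ∣ ∏ Q' ∈ S, Q' ^ eIdx Q' := hQdvd.trans hPD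
    obtain ⟨Q', hQ'S, hQQ'⟩ := (hBprime Q hQirr).exists_mem_finset_dvd hQD
    have hQQ'as : Associated Q Q' :=
      hQirr.associated_of_dvd (hS1 Q' hQ'S).1 ((hBprime Q hQirr).dvd_of_dvd_pow hQQ')
    exact h_ram_assoc Q' Q hQQ'as.symm
      ⟨(hS1 Q' hQ'S).1, eIdx Q', (hS1 Q' hQ'S).2.1, (hS1 Q' hQ'S).2.2⟩
  · intro hprop
    have h1 : ∀ Q ∈ S, ∃ P : A, Irreducible P ∧
        (Ideal.span {Q}).comap (algebraMap A (MvPolynomial (Fin n) ℂ)) = Ideal.span {P} ∧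
        MultIs Q (P : MvPolynomial (Fin n) ℂ) (eIdx Q) := fun Q hQ => (hS1 Q hQ).2.1
    choose P hPirr hPcom hPmult using h1
    have hEpos : ∀ Q ∈ S, eIdx Q ≠ 0 := fun Q hQ => by have := (hS1 Q hQ).2.2; omega
    have hQdvdP : ∀ Q (hQ : Q ∈ S), Q ∣ ((P Q hQ : A) : MvPolynomial (Fin n) ℂ) :=
      fun Q hQ => (dvd_pow_self Q (hEpos Q hQ)).trans (hPmult Q hQ).1
    have hPne : ∀ Q (hQ : Q ∈ S), ((P Q hQ : A) : MvPolynomial (Fin n) ℂ) ≠ 0 := by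
      intro Q hQ h0
      exact (hPmult Q hQ).2 (h0 ▸ dvd_zero _)
    have hram : ∀ Q ∈ S, IsRamified A Q :=
      fun Q hQ => ⟨(hS1 Q hQ).1, eIdx Q, (hS1 Q hQ).2.1, (hS1 Q hQ).2.2⟩
    have hassoc : ∀ Q (hQ : Q ∈ S), ∀ Q' (hQ' : Q' ∈ S),
        Q' ∣ ((P Q hQ : A) : MvPolynomial (Fin n) ℂ) →
        Associated ((P Q' hQ' : A) : MvPolynomial (Fin n) ℂ)
          ((P Q hQ : A) : MvPolynomial (Fin n) ℂ) :=
      fun Q hQ Q' hQ' hd =>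
        ((hPirr Q' hQ').associated_of_dvd (hPirr Q hQ)
          (h_dvd_comap Q' (P Q' hQ') (P Q hQ) (hPcom Q' hQ') hd)).map A.val
    have hclass : ∀ Q (hQ : Q ∈ S),
        (∏ Q' ∈ S.filter (fun Q' => Q' ∣ ((P Q hQ : A) : MvPolynomial (Fin n) ℂ)),
          Q' ^ eIdx Q') ∈ A := by
      intro Q hQ
      have hA1 : Associated ((P Q hQ : A) : MvPolynomial (Fin n) ℂ)
          (∏ Q' ∈ S.filter (fun Q' => Q' ∣ ((P Q hQ : A) : MvPolynomial (Fin n) ℂ)),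
            Q' ^ eIdx Q') := by
        apply assoc_prod_of_factors _ _ _ (hPne Q hQ)
        · intro t ht
          rw [Finset.mem_filter] at ht
          obtain ⟨htS, htd⟩ := ht
          have ha := hassoc Q hQ t htS htd
          refine ⟨hBprime t (hS1 t htS).1, by have := (hS1 t htS).2.2; omega,
            ha.dvd_iff_dvd_right.mp (hPmult t htS).1,
            fun h => (hPmult t htS).2 (ha.dvd_iff_dvd_right.mpr h)⟩
        · intro t ht s hs hne
          rw [Finset.mem_filter] at ht hs
          exact hS2 t ht.1 s hs.1 hne
        · intro q hq hqd
          have hqram : IsRamified A q := hprop (P Q hQ) (hPirr Q hQ)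
            ⟨Q, (hS1 Q hQ).1, hQdvdP Q hQ, hram Q hQ⟩ q hq.irreducible hqd
          obtain ⟨Q', ⟨hQ'S, hQ'as⟩, -⟩ := hS3 q hqram
          exact ⟨Q', Finset.mem_filter.mpr ⟨hQ'S, hQ'as.symm.dvd.trans hqd⟩, hQ'as⟩
      obtain ⟨u, hu⟩ := hA1
      obtain ⟨c, hc⟩ := mv_isUnit_eq_C (u : MvPolynomial (Fin n) ℂ) u.isUnit
      have hCc : (MvPolynomial.C c : MvPolynomial (Fin n) ℂ) ∈ A := by
        rw [← MvPolynomial.algebraMap_eq]; exact A.algebraMap_mem c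
      rw [← hu, hc]
      exact A.mul_mem (P Q hQ).2 hCc
    have hmain : ∀ (k : ℕ) (T : Finset (MvPolynomial (Fin n) ℂ)), T.card ≤ k →
        ∀ (hT : T ⊆ S),
        (∀ Q (hQ : Q ∈ T), ∀ Q' ∈ S,
          Q' ∣ ((P Q (hT hQ) : A) : MvPolynomial (Fin n) ℂ) → Q' ∈ T) →
        (∏ Q ∈ T, Q ^ eIdx Q) ∈ A := by
      intro k
      induction k with
      | zero =>
        intro T hcard hT _
        rw [Finset.card_eq_zero.mp (Nat.le_zero.mp hcard), Finset.prod_empty]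
        exact A.one_mem
      | succ k ih =>
        intro T hcard hT hclosed
        rcases Finset.eq_empty_or_nonempty T with rfl | ⟨Q, hQT⟩
        · rw [Finset.prod_empty]; exact A.one_mem
        have hQS : Q ∈ S := hT hQT
        set Cl := S.filter (fun Q' => Q' ∣ ((P Q hQS : A) : MvPolynomial (Fin n) ℂ)) with hCl
        have hCT : Cl ⊆ T := by
          intro Q' hQ'
          rw [hCl, Finset.mem_filter] at hQ'
          exact hclosed Q hQT Q' hQ'.1 hQ'.2
        have hQC : Q ∈ Cl := Finset.mem_filter.mpr ⟨hQS, hQdvdP Q hQS⟩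
        have hrest : (∏ Q' ∈ T \ Cl, Q' ^ eIdx Q') ∈ A := by
          refine ih (T \ Cl) ?_ (fun Q1 hQ1 => hT (Finset.mem_sdiff.mp hQ1).1) ?_
          · have h2 : 1 ≤ Cl.card := Finset.card_pos.mpr ⟨Q, hQC⟩
            have h3 := Finset.card_sdiff_of_subset hCT
            have h4 := Finset.card_le_card hCT
            omega
          · intro Q1 hQ1 Q2 hQ2S hd
            have hQ1T := (Finset.mem_sdiff.mp hQ1).1
            have hQ1nC := (Finset.mem_sdiff.mp hQ1).2
            refine Finset.mem_sdiff.mpr ⟨hclosed Q1 hQ1T Q2 hQ2S hd, ?_⟩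
            intro hQ2C
            rw [hCl, Finset.mem_filter] at hQ2C
            have haQ1 := hassoc Q hQS Q2 hQ2C.1 hQ2C.2
            have haQ2 := hassoc Q1 (hT hQ1T) Q2 hQ2C.1 hd
            have hfin : Associated ((P Q1 (hT hQ1T) : A) : MvPolynomial (Fin n) ℂ)
                ((P Q hQS : A) : MvPolynomial (Fin n) ℂ) := haQ2.symm.trans haQ1
            exact hQ1nC (Finset.mem_filter.mpr ⟨hT hQ1T,
              hfin.dvd_iff_dvd_right.mp (hQdvdP Q1 (hT hQ1T))⟩)
        have hsplit := Finset.prod_sdiff (f := fun Q' => Q' ^ eIdx Q') hCT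
        rw [← hsplit]
        exact A.mul_mem hrest (hclass Q hQS)
    exact hmain S.card S le_rfl (Finset.Subset.refl S) (fun Q hQ Q' hQ'S _ => hQ'S)
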